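/- Let q ∈ ℂ with |q| > 1. For any c ∈ ℂ*, the operator f(z) ↦ c·z^{-1}·f(qz) − f(z) is bijective on the field of formal Laurent series ℂ((z)). -/

import Mathlib

/-- Formal Laurent series over ℂ, modeled as coefficient functions `ℤ → ℂ`
whose support is bounded below. -/
abbrev FormalLaurent : Type := {f : ℤ → ℂ // ∃ N : ℤ, ∀ k < N, f k = 0}

/-- Auxiliary recursion for the inverse: coefficients of the preimage. -/
noncomputable def auxF (q c : ℂ) (N : ℤ) (g : ℤ → ℂ) : ℕ → ℂ
  | 0 => 0
  | n + 1 => (auxF q c N g n + g (N + n)) / (c * q ^ (N + n + 1))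

/-- For `|q| > 1` and any `c ∈ ℂ*`, the operator `f(z) ↦ c·z⁻¹·f(qz) − f(z)`,
acting on coefficients by `(Tf)_k = c q^{k+1} f_{k+1} − f_k`, is bijective on `ℂ((z))`. -/
theorem stmt_1 (q c : ℂ) (hq : 1 < ‖q‖) (hc : c ≠ 0) :
    Function.Bijective (fun f : FormalLaurent =>
      (⟨fun k => c * q ^ (k + 1) * f.1 (k + 1) - f.1 k,
        by
          obtain ⟨N, hN⟩ := f.2
          refine ⟨N - 1, fun k hk => ?_⟩
          show c * q ^ (k + 1) * f.1 (k + 1) - f.1 k = 0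
          rw [hN (k + 1) (by omega), hN k (by omega)]
          ring⟩ : FormalLaurent)) := by
  have hq0 : q ≠ 0 := by
    intro h
    rw [h] at hq
    simp at hq
    linarith
  constructor
  · intro f1 f2 hEq
    have hk : ∀ k : ℤ, c * q ^ (k + 1) * f1.1 (k + 1) - f1.1 k
        = c * q ^ (k + 1) * f2.1 (k + 1) - f2.1 k := fun k =>
      congrFun (congrArg Subtype.val hEq) k
    by_contra hne
    have : ∃ k0 : ℤ, f1.1 k0 ≠ f2.1 k0 := by
      by_contra h
      push_neg at h
      exact hne (Subtype.ext (funext h))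
    obtain ⟨k0, hk0⟩ := this
    set d : ℤ → ℂ := fun k => f1.1 k - f2.1 k with hd
    have hrec : ∀ k : ℤ, d k = c * q ^ (k + 1) * d (k + 1) := by
      intro k
      simp only [hd]
      linear_combination -(hk k)
    have hdown : ∀ n : ℕ, d (k0 - n) ≠ 0 := by
      intro n
      induction n with
      | zero => simpa [hd] using sub_ne_zero_of_ne hk0
      | succ m ih =>
        have h1 : d (k0 - (m + 1 : ℕ)) = c * q ^ (k0 - m) * d (k0 - m) := by
          have := hrec (k0 - (m + 1 : ℕ))
          have he : (k0 - (m + 1 : ℕ)) + 1 = k0 - m := by push_cast; ring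
          rw [he] at this
          exact this
        rw [h1]
        exact mul_ne_zero (mul_ne_zero hc (zpow_ne_zero _ hq0)) ih
    obtain ⟨N1, hN1⟩ := f1.2
    obtain ⟨N2, hN2⟩ := f2.2
    set M : ℤ := min N1 N2 with hM
    have := hdown (k0 - M + 1).toNat
    apply this
    have hlt : k0 - ((k0 - M + 1).toNat : ℤ) < M := by omega
    simp only [hd]
    rw [hN1 _ (lt_of_lt_of_le hlt (min_le_left _ _)),
        hN2 _ (lt_of_lt_of_le hlt (min_le_right _ _))]
    ring
  · intro g
    obtain ⟨N, hN⟩ := g.2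
    set f : ℤ → ℂ := fun k => if N ≤ k then auxF q c N g.1 (k - N).toNat else 0 with hf
    refine ⟨⟨f, N, fun k hk => by simp [hf, not_le.mpr hk]⟩, ?_⟩
    apply Subtype.ext
    funext k
    show c * q ^ (k + 1) * f (k + 1) - f k = g.1 k
    rcases lt_or_ge k N with h | h
    · have hfk : f k = 0 := by simp [hf, not_le.mpr h]
      have hfk1 : f (k + 1) = 0 := by
        rcases lt_or_ge (k + 1) N with h1 | h1
        · simp [hf, not_le.mpr h1]
        · have heq : k + 1 = N := le_antisymm (by omega) h1
          have h0 : (k + 1 - N).toNat = 0 := by omega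
          simp only [hf, if_pos h1, h0]
          rfl
      rw [hfk, hfk1, hN k h]
      ring
    · set n : ℕ := (k - N).toNat with hn
      have hkn : k = N + n := by omega
      have hfk : f k = auxF q c N g.1 n := by simp [hf, h, hn]
      have hfk1 : f (k + 1) = auxF q c N g.1 (n + 1) := by
        have h1 : N ≤ k + 1 := by omega
        have h2 : (k + 1 - N).toNat = n + 1 := by omega
        simp [hf, h1, h2]
      rw [hfk, hfk1]
      show c * q ^ (k + 1) * ((auxF q c N g.1 n + g.1 (N + n)) / (c * q ^ (N + n + 1)))
          - auxF q c N g.1 n = g.1 k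
      rw [← hkn]
      have hne : c * q ^ (k + 1) ≠ 0 := mul_ne_zero hc (zpow_ne_zero _ hq0)
      have hcan := div_mul_cancel₀ (auxF q c N g.1 n + g.1 k) hne
      linear_combination hcan
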